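/- arXiv:2601.21839 — 2 statements merged into one kernel-verified Lean document; each statement's English description precedes it below -/
import Mathlib

section
/- Let x_1 > x_2 > ... > x_N be real numbers, y_1, ..., y_N ≥ 0, and σ^β the softmax with inverse temperature β > 0. Then Σ_{i=1}^N y_i σ^β(x)_i ≥ y_1 − exp(−β(x_1 − x_2)) · Σ_{i=2}^N (y_i + y_1). -/
/-- **Softmax-weighted average lower bound.** If `x 0 > x 1 > ... > x (N-1)`, `y i ≥ 0`,
and `β > 0`, then `∑ i, y i · σ^β(x)_i ≥ y 0 − exp(−β(x 0 − x 1)) · ∑_{i ≠ 0} (y i + y 0)`. -/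
theorem softmax_average_lower_bound (N : ℕ) (hN : 2 ≤ N) (x y : Fin N → ℝ)
    (hx : StrictAnti x) (hy : ∀ i, 0 ≤ y i) (β : ℝ) (hβ : 0 < β) :
    (∑ i, y i * (Real.exp (β * x i) / (∑ j, Real.exp (β * x j))))
      ≥ y ⟨0, by omega⟩ -
        Real.exp (-β * (x ⟨0, by omega⟩ - x ⟨1, by omega⟩)) *
          ∑ i ∈ Finset.univ.erase (⟨0, by omega⟩ : Fin N), (y i + y ⟨0, by omega⟩) := by
  set i0 : Fin N := ⟨0, by omega⟩
  set i1 : Fin N := ⟨1, by omega⟩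
  set S : ℝ := ∑ j, Real.exp (β * x j) with hSdef
  have hS : 0 < S := Finset.sum_pos (fun j _ => Real.exp_pos _) ⟨i0, Finset.mem_univ _⟩
  set σ : Fin N → ℝ := fun i => Real.exp (β * x i) / S with hσdef
  have hσpos : ∀ i, 0 < σ i := fun i => div_pos (Real.exp_pos _) hS
  have hsum1 : ∑ i, σ i = 1 := by
    rw [hσdef, ← Finset.sum_div, div_self hS.ne']
  set E : ℝ := Real.exp (-β * (x i0 - x i1)) with hEdef
  -- each σ i for i ≠ 0 is at most E
  have hσle : ∀ i ∈ Finset.univ.erase i0, σ i ≤ E := by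
    intro i hi
    have hi0 : i ≠ i0 := Finset.ne_of_mem_erase hi
    have hSge : Real.exp (β * x i0) ≤ S :=
      Finset.single_le_sum (f := fun j => Real.exp (β * x j)) (fun j _ => (Real.exp_pos _).le) (Finset.mem_univ i0)
    have h1 : σ i ≤ Real.exp (β * x i) / Real.exp (β * x i0) :=
      div_le_div_of_nonneg_left (Real.exp_pos _).le (Real.exp_pos _) hSge
    have h2 : Real.exp (β * x i) / Real.exp (β * x i0)
        = Real.exp (-β * (x i0 - x i)) := by
      rw [← Real.exp_sub]; ring_nf
    have hi1 : i1 ≤ i := by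
      have : (1 : ℕ) ≤ (i : ℕ) := by
        rcases Nat.eq_zero_or_pos (i : ℕ) with h | h
        · exact absurd (Fin.ext h : i = i0) hi0
        · exact h
      exact this
    have hxle : x i ≤ x i1 := hx.antitone hi1
    have h3 : Real.exp (-β * (x i0 - x i)) ≤ E := by
      apply Real.exp_le_exp.mpr
      nlinarith
    linarith [h1, h2 ▸ h1]
  have hE0 : 0 ≤ E := Real.exp_nonneg _
  -- main chain
  have hstep1 : y i0 * σ i0 ≤ ∑ i, y i * σ i :=
    Finset.single_le_sum (fun i _ => mul_nonneg (hy i) (hσpos i).le) (Finset.mem_univ i0)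
  have hσ0 : σ i0 = 1 - ∑ i ∈ Finset.univ.erase i0, σ i := by
    have := Finset.add_sum_erase Finset.univ σ (Finset.mem_univ i0)
    rw [hsum1] at this
    linarith
  have hbound : ∑ i ∈ Finset.univ.erase i0, σ i
      ≤ E * (Finset.univ.erase i0).card := by
    calc ∑ i ∈ Finset.univ.erase i0, σ i ≤ ∑ _i ∈ Finset.univ.erase i0, E :=
          Finset.sum_le_sum hσle
      _ = E * (Finset.univ.erase i0).card := by
          rw [Finset.sum_const, nsmul_eq_mul, mul_comm]
  have hy0 : 0 ≤ y i0 := hy i0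
  have hfinal : y i0 * ∑ i ∈ Finset.univ.erase i0, σ i
      ≤ E * ∑ i ∈ Finset.univ.erase i0, (y i + y i0) := by
    calc y i0 * ∑ i ∈ Finset.univ.erase i0, σ i
        = ∑ i ∈ Finset.univ.erase i0, y i0 * σ i := by rw [Finset.mul_sum]
      _ ≤ ∑ i ∈ Finset.univ.erase i0, E * (y i + y i0) := by
          apply Finset.sum_le_sum
          intro i hi
          have h := hσle i hi
          have := hy i
          nlinarith [(hσpos i).le]
      _ = E * ∑ i ∈ Finset.univ.erase i0, (y i + y i0) := by rw [Finset.mul_sum]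
  have : y i0 * σ i0 = y i0 - y i0 * ∑ i ∈ Finset.univ.erase i0, σ i := by
    rw [hσ0]; ring
  rw [ge_iff_le]
  calc y i0 - E * ∑ i ∈ Finset.univ.erase i0, (y i + y i0)
      ≤ y i0 - y i0 * ∑ i ∈ Finset.univ.erase i0, σ i := by linarith
    _ = y i0 * σ i0 := this.symm
    _ ≤ ∑ i, y i * σ i := hstep1
end

section
/- In a test-time compute game with boundedly rational users, any unilateral deviation by a provider i that strictly increases their utility strictly increases the potential Φ(θ) = Σ_{j=1}^N log(p_j(θ_j) − c_j(θ_j)) + β·Σ_{j=1}^N V_j(θ_j) − log(exp(βV_0) + Σ_{j=1}^N exp(βV_j(θ_j))). That is, if U_i(θ'_i; θ_{−i}) > U_i(θ_i; θ_{−i}) then Φ(θ'_i; θ_{−i}) > Φ(θ). -/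
/-- **Bounded-rationality potential.** In the test-time compute game with boundedly rational
users, any unilateral deviation by provider `i` that strictly increases their utility
strictly increases the potential
`Φ(θ) = ∑_j log(p_j(θ_j) − c_j(θ_j)) + β·∑_j V_j(θ_j) − log(exp(βV₀) + ∑_j exp(βV_j(θ_j)))`,
where `V_j(θ) = q_j(θ) − p_j(θ)`, the market share is
`s_i(θ) = exp(βV_i(θ_i)) / (exp(βV₀) + ∑_j exp(βV_j(θ_j)))`, and
`U_i(θ) = s_i(θ)·(p_i(θ_i) − c_i(θ_i))`. -/
theorem bounded_rationality_potential (N : ℕ) (Θ : Type*) [Fintype Θ]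
    (p c q : Fin N → Θ → ℝ)
    (hprofit : ∀ i t, 0 < p i t - c i t) (hq : ∀ i t, 0 ≤ q i t)
    (V₀ β : ℝ) (hβ : 0 < β)
    (θ : Fin N → Θ) (i : Fin N) (θ' : Θ)
    (hU : (Real.exp (β * (q i θ' - p i θ')) /
            (Real.exp (β * V₀) +
              ∑ j, Real.exp (β * (q j (Function.update θ i θ' j) - p j (Function.update θ i θ' j)))))
          * (p i θ' - c i θ')
        > (Real.exp (β * (q i (θ i) - p i (θ i))) /
            (Real.exp (β * V₀) + ∑ j, Real.exp (β * (q j (θ j) - p j (θ j)))))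
          * (p i (θ i) - c i (θ i))) :
    (∑ j, Real.log (p j (Function.update θ i θ' j) - c j (Function.update θ i θ' j)))
      + β * ∑ j, (q j (Function.update θ i θ' j) - p j (Function.update θ i θ' j))
      - Real.log (Real.exp (β * V₀) +
          ∑ j, Real.exp (β * (q j (Function.update θ i θ' j) - p j (Function.update θ i θ' j))))
    > (∑ j, Real.log (p j (θ j) - c j (θ j)))
      + β * ∑ j, (q j (θ j) - p j (θ j))
      - Real.log (Real.exp (β * V₀) + ∑ j, Real.exp (β * (q j (θ j) - p j (θ j)))) := by

  classical
  set F := Function.update θ i θ' with hF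
  have hFi : F i = θ' := Function.update_self i θ' θ
  have hFj : ∀ j ∈ Finset.univ.erase i, F j = θ j := fun j hj =>
    Function.update_of_ne (Finset.ne_of_mem_erase hj) θ' θ
  set D : ℝ := Real.exp (β * V₀) + ∑ j, Real.exp (β * (q j (θ j) - p j (θ j))) with hDdef
  set D' : ℝ := Real.exp (β * V₀) + ∑ j, Real.exp (β * (q j (F j) - p j (F j))) with hD'def
  have hD : 0 < D := by positivity
  have hD' : 0 < D' := by positivity
  have hu : 0 < Real.exp (β * (q i (θ i) - p i (θ i))) / D * (p i (θ i) - c i (θ i)) :=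
    mul_pos (div_pos (Real.exp_pos _) hD) (hprofit i (θ i))
  have hlog := Real.log_lt_log hu hU
  rw [Real.log_mul (ne_of_gt (div_pos (Real.exp_pos _) hD)) (ne_of_gt (hprofit i (θ i))),
      Real.log_mul (ne_of_gt (div_pos (Real.exp_pos _) hD')) (ne_of_gt (hprofit i θ')),
      Real.log_div (Real.exp_ne_zero _) hD.ne', Real.log_div (Real.exp_ne_zero _) hD'.ne',
      Real.log_exp, Real.log_exp] at hlog
  have hs1 : ∑ j, Real.log (p j (F j) - c j (F j))
      = Real.log (p i θ' - c i θ') + ∑ j ∈ Finset.univ.erase i, Real.log (p j (θ j) - c j (θ j)) := by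
    rw [← Finset.add_sum_erase _ _ (Finset.mem_univ i), hFi]
    exact congrArg _ (Finset.sum_congr rfl fun j hj => by rw [hFj j hj])
  have hs2 : ∑ j, Real.log (p j (θ j) - c j (θ j))
      = Real.log (p i (θ i) - c i (θ i)) + ∑ j ∈ Finset.univ.erase i, Real.log (p j (θ j) - c j (θ j)) :=
    (Finset.add_sum_erase _ _ (Finset.mem_univ i)).symm
  have hs3 : ∑ j, (q j (F j) - p j (F j))
      = (q i θ' - p i θ') + ∑ j ∈ Finset.univ.erase i, (q j (θ j) - p j (θ j)) := by
    rw [← Finset.add_sum_erase _ _ (Finset.mem_univ i), hFi]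
    exact congrArg _ (Finset.sum_congr rfl fun j hj => by rw [hFj j hj])
  have hs4 : ∑ j, (q j (θ j) - p j (θ j))
      = (q i (θ i) - p i (θ i)) + ∑ j ∈ Finset.univ.erase i, (q j (θ j) - p j (θ j)) :=
    (Finset.add_sum_erase _ _ (Finset.mem_univ i)).symm
  rw [hs1, hs2, hs3, hs4]
  linarith [hlog]
end
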